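/- Every ℤ_q-flow on a graph G lifts to a ℤ-flow: for each ℤ_q-flow f there exists a ℤ-flow f' on G whose reduction modulo q equals f. -/
import Mathlib


open Finset

noncomputable section

attribute [local instance] Classical.propDecidable

/-- A finite multigraph with a fixed orientation: each edge has a source and a target. -/
structure Multigraph (V E : Type) where
  src : E → V
  tgt : E → V

namespace Multigraph

variable {V E : Type} [Fintype V] [Fintype E] [DecidableEq V] [DecidableEq E]

/-- A `ℤ_q`-flow: conservation at every vertex. -/
def IsFlow (G : Multigraph V E) (q : ℕ) (f : E → ZMod q) : Prop :=
  ∀ v : V, ∑ e ∈ univ.filter (fun e => G.tgt e = v), f e =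
           ∑ e ∈ univ.filter (fun e => G.src e = v), f e

/-- A `ℤ`-flow: conservation at every vertex. -/
def IsZFlow (G : Multigraph V E) (f : E → ℤ) : Prop :=
  ∀ v : V, ∑ e ∈ univ.filter (fun e => G.tgt e = v), f e =
           ∑ e ∈ univ.filter (fun e => G.src e = v), f e

/-- The support of a flow: the set of edges with nonzero value. -/
def flowSupport {q : ℕ} (f : E → ZMod q) : Finset E :=
  univ.filter (fun e => f e ≠ 0)

/-- Flow partition function (complex variable). -/
def Zflow (G : Multigraph V E) (q : ℕ) [NeZero q] (x : ℂ) : ℂ :=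
  ∑ f ∈ univ.filter (fun f : E → ZMod q => G.IsFlow q f), x ^ (flowSupport f).card

/-- Flow partition function (real variable). -/
def ZflowR (G : Multigraph V E) (q : ℕ) [NeZero q] (x : ℝ) : ℝ :=
  ∑ f ∈ univ.filter (fun f : E → ZMod q => G.IsFlow q f), x ^ (flowSupport f).card

/-- Potts partition function: sum over colourings of `w ^ (number of monochromatic edges)`. -/
def ZPotts (G : Multigraph V E) (q : ℕ) (w : ℂ) : ℂ :=
  ∑ σ : V → Fin q, w ^ (univ.filter (fun e => σ (G.src e) = σ (G.tgt e))).card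

/-- The simple graph on `V` induced by the edges in `F` (loops/multiplicities dropped;
this does not change connected components). -/
def compRel (G : Multigraph V E) (F : Finset E) : SimpleGraph V :=
  SimpleGraph.fromRel (fun v w => ∃ e ∈ F, G.src e = v ∧ G.tgt e = w)

/-- Number of connected components of the spanning subgraph `(V, F)`. -/
def compCount (G : Multigraph V E) (F : Finset E) : ℕ :=
  Nat.card (G.compRel F).ConnectedComponent

/-- Random cluster partition function. -/
def ZRC (G : Multigraph V E) (q : ℕ) (y : ℂ) : ℂ :=
  ∑ F : Finset E, (q : ℂ) ^ (G.compCount F) * y ^ F.card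

/-- The spanning subgraph `(V, A)`. -/
def edgeSubgraph (G : Multigraph V E) (A : Finset E) : Multigraph V {e : E // e ∈ A} :=
  ⟨fun e => G.src e.1, fun e => G.tgt e.1⟩

/-- Deletion of the edge `e`. -/
def deleteEdge (G : Multigraph V E) (e : E) : Multigraph V {e' : E // e' ≠ e} :=
  ⟨fun e' => G.src e'.1, fun e' => G.tgt e'.1⟩

/-- Contraction of the edge `e`: the edge `e` is removed and every endpoint equal to
`G.tgt e` is redirected to `G.src e`, merging the two endpoints of `e`. -/
def contractEdge (G : Multigraph V E) (e : E) : Multigraph V {e' : E // e' ≠ e} :=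
  ⟨fun e' => if G.src e'.1 = G.tgt e then G.src e else G.src e'.1,
   fun e' => if G.tgt e'.1 = G.tgt e then G.src e else G.tgt e'.1⟩

end Multigraph

/-- The `(L+1) × (L+1)` grid graph, with horizontal and vertical edges oriented
in the positive direction. -/
def gridGraph (L : ℕ) :
    Multigraph (Fin (L+1) × Fin (L+1)) ((Fin L × Fin (L+1)) ⊕ (Fin (L+1) × Fin L)) :=
  ⟨Sum.elim (fun p => (p.1.castSucc, p.2)) (fun p => (p.1, p.2.castSucc)),
   Sum.elim (fun p => (p.1.succ, p.2)) (fun p => (p.1, p.2.succ))⟩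

section Aux

open Finset

variable {E M : Type} [Fintype E] [DecidableEq E] [AddCommMonoid M]

lemma aux_split (e : E) (P : E → Prop) [DecidablePred P] (u : E → M) :
    ∑ x ∈ univ.filter P, u x =
      (∑ x ∈ (univ.erase e).filter P, u x) + (if P e then u e else 0) := by
  rw [Finset.sum_filter, Finset.sum_filter,
    ← Finset.sum_erase_add univ _ (mem_univ e)]

lemma aux_subtype (e : E) (P : E → Prop) [DecidablePred P] (u : E → M) :
    ∑ x ∈ univ.filter (fun x : {x : E // x ≠ e} => P x.1), u x.1 =
      ∑ x ∈ (univ.erase e).filter P, u x := by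
  rw [Finset.sum_filter, Finset.sum_filter,
    Finset.sum_subtype (p := fun x => x ≠ e) (univ.erase e) (fun x => by simp)
      (fun x => if P x then u x else 0)]

end Aux
section Main

open Finset Multigraph

theorem flow_lift_aux (n : ℕ) :
    ∀ {V E : Type} [Fintype V] [Fintype E] [DecidableEq V] [DecidableEq E]
      (G : Multigraph V E), Fintype.card E = n → ∀ (q : ℕ) (f : E → ZMod q),
      G.IsFlow q f → ∃ f' : E → ℤ, G.IsZFlow f' ∧ ∀ e, ((f' e : ZMod q)) = f e := by
  induction n with
  | zero =>
    intro V E _ _ _ _ G hE q f hf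
    have : IsEmpty E := Fintype.card_eq_zero_iff.mp hE
    exact ⟨fun _ => 0, fun v => by simp, fun e => (this.elim e)⟩
  | succ n ih =>
    intro V E _ _ _ _ G hE q f hf
    have hne : Nonempty E := Fintype.card_pos_iff.mp (by omega)
    obtain ⟨e⟩ := hne
    have hcard : Fintype.card {x : E // x ≠ e} = n := by
      have h1 : Fintype.card {x : E // ¬ x = e} = Fintype.card E - Fintype.card {x : E // x = e} :=
        Fintype.card_subtype_compl _
      simp only [Fintype.card_subtype_eq, hE] at h1
      simpa using h1
    by_cases hl : G.src e = G.tgt e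
    · -- loop case
      have hf'' : (G.deleteEdge e).IsFlow q (fun x => f x.1) := by
        intro v
        show ∑ x ∈ univ.filter (fun x : {x : E // x ≠ e} => G.tgt x.1 = v), f x.1 =
          ∑ x ∈ univ.filter (fun x : {x : E // x ≠ e} => G.src x.1 = v), f x.1
        rw [aux_subtype e (fun y => G.tgt y = v) f, aux_subtype e (fun y => G.src y = v) f]
        have h2 := hf v
        rw [aux_split e (fun x => G.tgt x = v) f, aux_split e (fun x => G.src x = v) f, hl] at h2
        exact add_right_cancel h2
      obtain ⟨g, hg, hgq⟩ := ih (G.deleteEdge e) hcard q _ hf''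
      set f' : E → ℤ := fun x => if h : x = e then ZMod.cast (f e) else g ⟨x, h⟩ with hF
      have hf'ne : ∀ (x : {x : E // x ≠ e}), f' x.1 = g x := fun x => by
        simp [hF, x.2]
      have hA : ∀ (P : E → Prop) [DecidablePred P],
          ∑ x ∈ (univ.erase e).filter P, f' x =
            ∑ x ∈ univ.filter (fun x : {x : E // x ≠ e} => P x.1), g x := by
        intro P _
        rw [← aux_subtype e P f']
        exact Finset.sum_congr rfl (fun x _ => hf'ne x)
      refine ⟨f', ?_, ?_⟩
      · intro v
        rw [aux_split e (fun x => G.tgt x = v) f', aux_split e (fun x => G.src x = v) f', hl]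
        congr 1
        rw [hA, hA]
        exact hg v
      · intro x
        by_cases h : x = e
        · subst h; simp [hF, ZMod.intCast_zmod_cast]
        · have : f' x = g ⟨x, h⟩ := by simp [hF, h]
          rw [this]
          exact hgq ⟨x, h⟩
    · -- contraction case
      have hf'' : (G.contractEdge e).IsFlow q (fun x => f x.1) := by
        intro v
        show ∑ x ∈ univ.filter
            (fun x : {x : E // x ≠ e} => (if G.tgt x.1 = G.tgt e then G.src e else G.tgt x.1) = v), f x.1 =
          ∑ x ∈ univ.filter
            (fun x : {x : E // x ≠ e} => (if G.src x.1 = G.tgt e then G.src e else G.src x.1) = v), f x.1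
        rw [aux_subtype e (fun y => (if G.tgt y = G.tgt e then G.src e else G.tgt y) = v) f,
          aux_subtype e (fun y => (if G.src y = G.tgt e then G.src e else G.src y) = v) f]
        by_cases hvt : v = G.tgt e
        · subst hvt
          have cond : ∀ w : V, ((if w = G.tgt e then G.src e else w) = G.tgt e) ↔ False := by
            intro w; split_ifs with h <;> simp [hl, h]
          simp [cond]
        by_cases hvs : v = G.src e
        · subst hvs
          have cond : ∀ w : V, ((if w = G.tgt e then G.src e else w) = G.src e) ↔
              (w = G.tgt e ∨ w = G.src e) := by
            intro w; split_ifs with h <;> simp [h]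
          simp only [cond]
          rw [Finset.filter_or, Finset.filter_or,
            Finset.sum_union (Finset.disjoint_filter.mpr
              (fun x _ h1 h2 => hl (h2.symm.trans h1))),
            Finset.sum_union (Finset.disjoint_filter.mpr
              (fun x _ h1 h2 => hl (h2.symm.trans h1)))]
          have h1 := hf (G.tgt e)
          rw [aux_split e (fun x => G.tgt x = G.tgt e) f,
            aux_split e (fun x => G.src x = G.tgt e) f, if_pos rfl, if_neg hl] at h1
          have h2 := hf (G.src e)
          rw [aux_split e (fun x => G.tgt x = G.src e) f,
            aux_split e (fun x => G.src x = G.src e) f,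
            if_neg (fun h => hl h.symm), if_pos rfl] at h2
          linear_combination h1 + h2
        · have cond : ∀ w : V, ((if w = G.tgt e then G.src e else w) = v) ↔ w = v := by
            intro w
            split_ifs with h
            · exact iff_of_false (fun hh => hvs hh.symm) (fun hh => hvt (h.symm.trans hh).symm)
            · exact Iff.rfl
          simp only [cond]
          have h2 := hf v
          rw [aux_split e (fun x => G.tgt x = v) f, aux_split e (fun x => G.src x = v) f,
            if_neg (fun h => hvt h.symm), if_neg (fun h => hvs h.symm)] at h2
          simpa using h2
      obtain ⟨g, hg, hgq⟩ := ih (G.contractEdge e) hcard q _ hf''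
      set c : ℤ := (∑ x ∈ univ.filter (fun x : {x : E // x ≠ e} => G.src x.1 = G.tgt e), g x) -
        (∑ x ∈ univ.filter (fun x : {x : E // x ≠ e} => G.tgt x.1 = G.tgt e), g x) with hcdef
      set f' : E → ℤ := fun x => if h : x = e then c else g ⟨x, h⟩ with hF
      have hf'e : f' e = c := by simp [hF]
      have hf'ne : ∀ (x : {x : E // x ≠ e}), f' x.1 = g x := fun x => by simp [hF, x.2]
      have hA : ∀ (P : E → Prop) [DecidablePred P],
          ∑ x ∈ (univ.erase e).filter P, f' x =
            ∑ x ∈ univ.filter (fun x : {x : E // x ≠ e} => P x.1), g x := by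
        intro P _
        rw [← aux_subtype e P f']
        exact Finset.sum_congr rfl (fun x _ => hf'ne x)
      have hc : f' e = (∑ x ∈ (univ.erase e).filter (fun x => G.src x = G.tgt e), f' x) -
          (∑ x ∈ (univ.erase e).filter (fun x => G.tgt x = G.tgt e), f' x) := by
        rw [hf'e, hA, hA]
      have hgE : ∀ v : V,
          ∑ x ∈ (univ.erase e).filter (fun x => (if G.tgt x = G.tgt e then G.src e else G.tgt x) = v), f' x =
          ∑ x ∈ (univ.erase e).filter (fun x => (if G.src x = G.tgt e then G.src e else G.src x) = v), f' x := by
        intro v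
        rw [hA, hA]
        exact hg v
      refine ⟨f', ?_, ?_⟩
      · intro v
        rw [aux_split e (fun x => G.tgt x = v) f', aux_split e (fun x => G.src x = v) f']
        by_cases hvt : v = G.tgt e
        · subst hvt
          rw [if_pos rfl, if_neg hl, hc]
          ring
        by_cases hvs : v = G.src e
        · subst hvs
          rw [if_neg (fun h => hl h.symm), if_pos rfl]
          have key := hgE (G.src e)
          have cond : ∀ w : V, ((if w = G.tgt e then G.src e else w) = G.src e) ↔
              (w = G.tgt e ∨ w = G.src e) := by
            intro w; split_ifs with h <;> simp [h]
          simp only [cond] at key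
          rw [Finset.filter_or, Finset.filter_or,
            Finset.sum_union (Finset.disjoint_filter.mpr
              (fun x _ h1 h2 => hl (h2.symm.trans h1))),
            Finset.sum_union (Finset.disjoint_filter.mpr
              (fun x _ h1 h2 => hl (h2.symm.trans h1)))] at key
          rw [hc]
          linear_combination key
        · have cond : ∀ w : V, ((if w = G.tgt e then G.src e else w) = v) ↔ w = v := by
            intro w
            split_ifs with h
            · exact iff_of_false (fun hh => hvs hh.symm) (fun hh => hvt (h.symm.trans hh).symm)
            · exact Iff.rfl
          have key := hgE v
          simp only [cond] at key
          rw [if_neg (fun h => hvt h.symm), if_neg (fun h => hvs h.symm)]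
          simpa using key
      · intro x
        by_cases h : x = e
        · subst h
          have hcast : ((f' x : ℤ) : ZMod q) =
              (∑ y ∈ univ.filter (fun y : {y : E // y ≠ x} => G.src y.1 = G.tgt x), f y.1) -
              (∑ y ∈ univ.filter (fun y : {y : E // y ≠ x} => G.tgt y.1 = G.tgt x), f y.1) := by
            rw [hf'e, hcdef]
            push_cast
            rw [Finset.sum_congr rfl (fun y _ => hgq y), Finset.sum_congr rfl (fun y _ => hgq y)]
          rw [hcast, aux_subtype x (fun y => G.src y = G.tgt x) f,
            aux_subtype x (fun y => G.tgt y = G.tgt x) f]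
          have h1 := hf (G.tgt x)
          rw [aux_split x (fun y => G.tgt y = G.tgt x) f,
            aux_split x (fun y => G.src y = G.tgt x) f, if_pos rfl, if_neg hl] at h1
          linear_combination -h1
        · have : f' x = g ⟨x, h⟩ := by simp [hF, h]
          rw [this]
          exact hgq ⟨x, h⟩

end Main
theorem flow_lift {V E : Type} [Fintype V] [Fintype E] [DecidableEq V] [DecidableEq E]
    (G : Multigraph V E) (q : ℕ) (f : E → ZMod q) (hf : G.IsFlow q f) :
    ∃ f' : E → ℤ, G.IsZFlow f' ∧ ∀ e, ((f' e : ZMod q)) = f e := by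
  exact flow_lift_aux (Fintype.card E) G rfl q f hf
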